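/- Let A, B be bounded linear operators on a complex Hilbert space H, K a nonempty set of unit vectors, ber(T)=sup_{k∈K}|⟨T k,k⟩|, ‖T‖_ber = sup_{k,l∈K}|⟨T k,l⟩|. Then ‖A + B‖_ber² ≤ 2 · ber(A*A + B*B). -/

import Mathlib

open ContinuousLinearMap

noncomputable def berNum {H : Type*} [NormedAddCommGroup H] [InnerProductSpace ℂ H]
    (K : Set H) (T : H →L[ℂ] H) : ℝ :=
  sSup {x : ℝ | ∃ k ∈ K, x = ‖(inner ℂ (T k) k : ℂ)‖}

noncomputable def berNorm {H : Type*} [NormedAddCommGroup H] [InnerProductSpace ℂ H]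
    (K : Set H) (T : H →L[ℂ] H) : ℝ :=
  sSup {x : ℝ | ∃ k ∈ K, ∃ l ∈ K, x = ‖(inner ℂ (T k) l : ℂ)‖}

theorem berNorm_add_sq {H : Type*} [NormedAddCommGroup H] [InnerProductSpace ℂ H] [CompleteSpace H]
    (A B : H →L[ℂ] H) (K : Set H) (hK : K.Nonempty) (hK1 : ∀ k ∈ K, ‖k‖ = 1) :
    (berNorm K (A + B)) ^ 2 ≤ 2 * berNum K (adjoint A * A + adjoint B * B) := by
  set C := adjoint A * A + adjoint B * B with hC
  obtain ⟨k₀, hk₀⟩ := hK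
  -- the inner product ⟨C k, k⟩ equals ‖A k‖² + ‖B k‖²
  have hCinner : ∀ k : H, (inner ℂ (C k) k : ℂ) = (‖A k‖ ^ 2 + ‖B k‖ ^ 2 : ℝ) := by
    intro k
    simp only [hC, ContinuousLinearMap.add_apply, ContinuousLinearMap.mul_apply,
      inner_add_left, adjoint_inner_left]
    rw [inner_self_eq_norm_sq_to_K, inner_self_eq_norm_sq_to_K]
    norm_cast
  -- the berNum set
  have hTbdd : BddAbove {x : ℝ | ∃ k ∈ K, x = ‖(inner ℂ (C k) k : ℂ)‖} := by
    refine ⟨‖C‖, ?_⟩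
    rintro x ⟨k, hk, rfl⟩
    calc ‖(inner ℂ (C k) k : ℂ)‖ ≤ ‖C k‖ * ‖k‖ := norm_inner_le_norm _ _
    _ ≤ ‖C‖ * ‖k‖ * ‖k‖ := by
        have := C.le_opNorm k
        nlinarith [norm_nonneg k]
    _ = ‖C‖ := by rw [hK1 k hk]; ring
  have hmem : ∀ k ∈ K, ‖A k‖ ^ 2 + ‖B k‖ ^ 2 ≤ berNum K C := by
    intro k hk
    have : ‖(inner ℂ (C k) k : ℂ)‖ = ‖A k‖ ^ 2 + ‖B k‖ ^ 2 := by
      rw [hCinner k, Complex.norm_real]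
      exact abs_of_nonneg (by positivity)
    rw [← this]
    exact le_csSup hTbdd ⟨k, hk, rfl⟩
  have hM0 : 0 ≤ berNum K C := le_trans (by positivity) (hmem k₀ hk₀)
  -- every element of the berNorm set is ≤ sqrt (2 * berNum K C)
  have hbound : ∀ x ∈ {x : ℝ | ∃ k ∈ K, ∃ l ∈ K, x = ‖(inner ℂ ((A + B) k) l : ℂ)‖},
      x ≤ Real.sqrt (2 * berNum K C) := by
    rintro x ⟨k, hk, l, hl, rfl⟩
    have h1 : ‖(inner ℂ ((A + B) k) l : ℂ)‖ ≤ ‖A k + B k‖ := by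
      calc ‖(inner ℂ ((A + B) k) l : ℂ)‖ ≤ ‖(A + B) k‖ * ‖l‖ := norm_inner_le_norm _ _
      _ = ‖A k + B k‖ := by rw [hK1 l hl, ContinuousLinearMap.add_apply, mul_one]
    have h2 : ‖A k + B k‖ ^ 2 ≤ 2 * (‖A k‖ ^ 2 + ‖B k‖ ^ 2) := by
      have := norm_add_le (A k) (B k)
      nlinarith [sq_nonneg (‖A k‖ - ‖B k‖), norm_nonneg (A k + B k)]
    have h3 : ‖(inner ℂ ((A + B) k) l : ℂ)‖ ^ 2 ≤ 2 * berNum K C := by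
      have := hmem k hk
      nlinarith [norm_nonneg (inner ℂ ((A + B) k) l : ℂ), norm_nonneg (A k + B k)]
    have := Real.sqrt_le_sqrt h3
    rwa [Real.sqrt_sq (norm_nonneg _)] at this
  have hS : berNorm K (A + B) ≤ Real.sqrt (2 * berNum K C) :=
    Real.sSup_le hbound (Real.sqrt_nonneg _)
  have hS0 : 0 ≤ berNorm K (A + B) := by
    rcases le_or_gt 0 (berNorm K (A + B)) with h | h
    · exact h
    · exact absurd (le_csSup ⟨_, hbound⟩ ⟨k₀, hk₀, k₀, hk₀, rfl⟩)
        (not_le.mpr (lt_of_lt_of_le h (norm_nonneg _)))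
  calc berNorm K (A + B) ^ 2 ≤ Real.sqrt (2 * berNum K C) ^ 2 := by
        exact pow_le_pow_left₀ hS0 hS 2
  _ = 2 * berNum K C := Real.sq_sqrt (by linarith)
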